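/- If g ∈ Le₁ (g(t) ≤ g(1) ≤ g(s) whenever 0 ≤ t ≤ 1 ≤ s), then for any probability densities p, q with respect to μ: δ_g(Q,P) ≥ |δ_{|g|}(Q,P)| ≥ 0. -/

import Mathlib

open Set MeasureTheory

theorem delta_divergence_abs_refinement_Le1
    {X : Type*} [MeasurableSpace X] (μ : Measure X)
    (p q : X → ℝ) (g : ℝ → ℝ)
    (hp0 : ∀ x, 0 ≤ p x) (hq0 : ∀ x, 0 ≤ q x)
    (hppos : ∀ᵐ x ∂μ, 0 < p x)
    (hpm : Measurable p) (hqm : Measurable q) (hgm : Measurable g)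
    (hp : Integrable p μ) (hq : Integrable q μ)
    (hp1 : ∫ x, p x ∂μ = 1) (hq1 : ∫ x, q x ∂μ = 1)
    (hg : ∀ t s : ℝ, 0 ≤ t → t ≤ 1 → 1 ≤ s → g t ≤ g 1 ∧ g 1 ≤ g s)
    (hint : Integrable (fun x => (q x - p x) * g (q x / p x)) μ)
    (hint2 : Integrable (fun x => (q x - p x) * |g (q x / p x)|) μ) :
    |∫ x, (q x - p x) * |g (q x / p x)| ∂μ| ≤
      ∫ x, (q x - p x) * g (q x / p x) ∂μ := by
  set c := g 1 with hc
  have hqp : Integrable (fun x => q x - p x) μ := hq.sub hp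
  have hsub : Integrable (fun x => (q x - p x) * c) μ := hqp.mul_const c
  have hsub' : Integrable (fun x => (q x - p x) * |c|) μ := hqp.mul_const |c|
  have hF : Integrable (fun x => (q x - p x) * (g (q x / p x) - c)) μ := by
    have := hint.sub hsub
    simpa [mul_sub, Pi.sub_def] using this
  have hG : Integrable (fun x => (q x - p x) * (|g (q x / p x)| - |c|)) μ := by
    have := hint2.sub hsub'
    simpa [mul_sub, Pi.sub_def] using this
  have hzero : ∫ x, (q x - p x) ∂μ = 0 := by
    rw [integral_sub hq hp, hq1, hp1]; ring
  have hEF : ∫ x, (q x - p x) * (g (q x / p x) - c) ∂μ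
      = ∫ x, (q x - p x) * g (q x / p x) ∂μ := by
    simp only [mul_sub]
    rw [integral_sub hint hsub, integral_mul_const, hzero, zero_mul, sub_zero]
  have hEG : ∫ x, (q x - p x) * (|g (q x / p x)| - |c|) ∂μ
      = ∫ x, (q x - p x) * |g (q x / p x)| ∂μ := by
    simp only [mul_sub]
    rw [integral_sub hint2 hsub', integral_mul_const, hzero, zero_mul, sub_zero]
  have hae : ∀ᵐ x ∂μ, |(q x - p x) * (|g (q x / p x)| - |c|)|
      ≤ (q x - p x) * (g (q x / p x) - c) := by
    filter_upwards [hppos] with x hx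
    set t := q x / p x with ht
    have ht0 : 0 ≤ t := div_nonneg (hq0 x) hx.le
    have habs : |(|g t| - |c|)| ≤ |g t - c| := abs_abs_sub_abs_le_abs_sub _ _
    rw [abs_mul]
    rcases le_or_gt t 1 with h1 | h1
    · have hd : q x - p x ≤ 0 := by
        have : q x ≤ p x := (div_le_one hx).mp h1
        linarith
      have hgt : g t ≤ c := (hg t 1 ht0 h1 le_rfl).1
      calc |q x - p x| * |(|g t| - |c|)| ≤ |q x - p x| * |g t - c| :=
            mul_le_mul_of_nonneg_left habs (abs_nonneg _)
        _ = (q x - p x) * (g t - c) := by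
            rw [abs_of_nonpos hd, abs_of_nonpos (by linarith)]; ring
    · have hd : 0 ≤ q x - p x := by
        have : p x ≤ q x := (one_le_div hx).mp h1.le
        linarith
      have hgt : c ≤ g t := (hg 1 t zero_le_one le_rfl h1.le).2
      calc |q x - p x| * |(|g t| - |c|)| ≤ |q x - p x| * |g t - c| :=
            mul_le_mul_of_nonneg_left habs (abs_nonneg _)
        _ = (q x - p x) * (g t - c) := by
            rw [abs_of_nonneg hd, abs_of_nonneg (by linarith)]
  calc |∫ x, (q x - p x) * |g (q x / p x)| ∂μ|
      = |∫ x, (q x - p x) * (|g (q x / p x)| - |c|) ∂μ| := by rw [hEG]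
    _ ≤ ∫ x, |(q x - p x) * (|g (q x / p x)| - |c|)| ∂μ := by
        have h := norm_integral_le_integral_norm (μ := μ)
          (f := fun x => (q x - p x) * (|g (q x / p x)| - |c|))
        simp only [Real.norm_eq_abs] at h
        exact h
    _ ≤ ∫ x, (q x - p x) * (g (q x / p x) - c) ∂μ :=
        integral_mono_ae hG.abs hF hae
    _ = _ := hEF
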